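/- Let 1 < m < 2 and let G(x) = e^{−x²/2}/√(2π) be the Gaussian kernel. Set σ² = (m−1)/(2−m), ν_∞ = (2π)^{m/2−1} (m−1)^{(m−1)/2} (2−m)^{(2−m)/2}, and ρ_∞(x) = e^{−x²/(2σ²)}/√(2πσ²). Then ρ_∞ has unit mass, ∫_ℝ ρ_∞(x) dx = 1, and the pair (ν_∞, ρ_∞) solves the nonlinear eigenvalue problem ν_∞ ρ_∞(x)^{m−1} = (G ∗ ρ_∞)(x) = (1/√(2π)) ∫_ℝ e^{−(x−y)²/2} ρ_∞(y) dy for all x ∈ ℝ. -/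

import Mathlib

open Set MeasureTheory Real

/-- The Gaussian limiting profile `ρ_∞(x) = e^{−x²/(2σ²)}/√(2πσ²)` with
`σ² = (m−1)/(2−m)`. -/
noncomputable def gaussProfile (m x : ℝ) : ℝ :=
  Real.exp (-x ^ 2 / (2 * ((m - 1) / (2 - m)))) /
    Real.sqrt (2 * Real.pi * ((m - 1) / (2 - m)))

/-- The critical diffusion constant
`ν_∞ = (2π)^{m/2−1} (m−1)^{(m−1)/2} (2−m)^{(2−m)/2}`. -/
noncomputable def nuInfty (m : ℝ) : ℝ :=
  (2 * Real.pi) ^ (m / 2 - 1) * (m - 1) ^ ((m - 1) / 2) * (2 - m) ^ ((2 - m) / 2)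

/-- For `1 < m < 2` and the Gaussian kernel `G(x) = e^{−x²/2}/√(2π)`, the pair
`(ν_∞, ρ_∞)` solves the nonlinear eigenvalue problem `ν_∞ ρ_∞^{m−1} = G ∗ ρ_∞` on
`ℝ`, and `ρ_∞` has unit mass. -/
theorem gaussian_limiting_profile (m : ℝ) (hm1 : 1 < m) (hm2 : m < 2) :
    (∫ x : ℝ, gaussProfile m x) = 1 ∧
    ∀ x : ℝ, nuInfty m * gaussProfile m x ^ (m - 1) =
      (Real.sqrt (2 * Real.pi))⁻¹ *
        ∫ y : ℝ, Real.exp (-(x - y) ^ 2 / 2) * gaussProfile m y := by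
  have hm1' : (0:ℝ) < m - 1 := by linarith
  have hm2' : (0:ℝ) < 2 - m := by linarith
  set s : ℝ := (m - 1) / (2 - m) with hs_def
  have hs : 0 < s := div_pos hm1' hm2'
  have hπ : (0:ℝ) < π := Real.pi_pos
  have h2πs : (0:ℝ) < 2 * π * s := by positivity
  have ht : 1 + s = 1 / (2 - m) := by
    field_simp [hs_def]
    rw [hs_def, add_mul, div_mul_cancel₀ _ hm2'.ne']; ring
  have hts : (0:ℝ) < 1 + s := by linarith
  constructor
  · unfold gaussProfile
    rw [integral_div]
    have h1 : ∀ x : ℝ, Real.exp (-x ^ 2 / (2 * s)) = Real.exp (-(1/(2*s)) * x ^ 2) := by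
      intro x; congr 1; field_simp
    simp_rw [← hs_def, h1]
    rw [integral_gaussian]
    rw [div_eq_one_iff_eq (by positivity)]
    congr 1
    field_simp
  · intro x
    unfold gaussProfile nuInfty
    simp_rw [← hs_def]
    -- rewrite the integrand
    have key : ∀ y : ℝ,
        Real.exp (-(x - y) ^ 2 / 2) * (Real.exp (-y ^ 2 / (2 * s)) / Real.sqrt (2 * π * s))
          = (Real.exp (-x ^ 2 / (2 * (1 + s))) / Real.sqrt (2 * π * s)) *
              Real.exp (-((1+s)/(2*s)) * (y - s * x / (1 + s)) ^ 2) := by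
      intro y
      rw [mul_div_assoc', div_mul_eq_mul_div, ← Real.exp_add, ← Real.exp_add]
      congr 2
      field_simp
      ring
    simp_rw [key]
    rw [integral_const_mul, integral_sub_right_eq_self
      (fun y => Real.exp (-((1+s)/(2*s)) * y ^ 2)) (s * x / (1 + s)),
      integral_gaussian]
    -- now pure algebra
    have hexp : Real.exp (-x ^ 2 / (2 * s)) ^ (m - 1)
        = Real.exp (-x ^ 2 / (2 * (1 + s))) := by
      rw [← Real.exp_mul]
      congr 1
      rw [ht]
      field_simp [hs_def]
      have hsm : s * (2 - m) = m - 1 := by rw [hs_def]; exact div_mul_cancel₀ _ hm2'.ne'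
      linear_combination x ^ 2 * hsm
    rw [div_rpow (Real.exp_pos _).le (Real.sqrt_nonneg _), hexp]
    have hsqrt : Real.sqrt (2 * π * s) ^ (m - 1) = (2 * π * s) ^ ((m - 1) / 2) := by
      rw [Real.sqrt_eq_rpow, ← Real.rpow_mul h2πs.le]
      congr 1
      ring
    rw [hsqrt]
    have h2π : (0:ℝ) < 2 * π := by positivity
    have hq : π / ((1 + s) / (2 * s)) = (2 * π * s) * (2 - m) := by
      rw [ht]; field_simp
    rw [hq, Real.sqrt_mul h2πs.le]
    have hconst : (2*π)^(m/2-1)*(m-1)^((m-1)/2)*(2-m)^((2-m)/2) / (2*π*s)^((m-1)/2)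
        = (Real.sqrt (2*π))⁻¹ * Real.sqrt (2-m) := by
      have e1 : (2*π)^(m/2-1 : ℝ) = (2*π)^((m-1)/2 : ℝ) * (2*π)^(-(1/2) : ℝ) := by
        rw [← Real.rpow_add h2π]; congr 1; ring
      have e2 : (2-m)^((2-m)/2 : ℝ) = (2-m)^((1:ℝ)/2) / (2-m)^((m-1)/2 : ℝ) := by
        rw [← Real.rpow_sub hm2']; congr 1; ring
      have e3 : (2*π*s)^((m-1)/2 : ℝ)
          = (2*π)^((m-1)/2:ℝ) * ((m-1)^((m-1)/2:ℝ) / (2-m)^((m-1)/2:ℝ)) := by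
        rw [mul_rpow h2π.le hs.le, hs_def, Real.div_rpow hm1'.le hm2'.le]
      rw [e1, e2, e3, Real.sqrt_eq_rpow, Real.sqrt_eq_rpow, ← Real.rpow_neg h2π.le]
      have p1 : (2*π:ℝ)^((m-1)/2:ℝ) ≠ 0 := (Real.rpow_pos_of_pos h2π _).ne'
      have p2 : (m-1:ℝ)^((m-1)/2:ℝ) ≠ 0 := (Real.rpow_pos_of_pos hm1' _).ne'
      have p3 : (2-m:ℝ)^((m-1)/2:ℝ) ≠ 0 := (Real.rpow_pos_of_pos hm2' _).ne'
      field_simp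
    have hR : Real.sqrt (2 * π * s) ≠ 0 := by positivity
    have hsimp : rexp (-x ^ 2 / (2 * (1 + s))) / Real.sqrt (2*π*s)
        * (Real.sqrt (2*π*s) * Real.sqrt (2-m))
        = rexp (-x ^ 2 / (2 * (1 + s))) * Real.sqrt (2-m) := by
      field_simp
    rw [hsimp]
    linear_combination rexp (-x ^ 2 / (2 * (1 + s))) * hconst
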